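/- For every τ ∈ A₀ and every b ∈ I_τ, the map φ_b maps X into X: for all z ∈ ℂ with |z − 1/2| ≤ 1/2, one has z + b ≠ 0 and |1/(z + b) − 1/2| ≤ 1/2. -/

import Mathlib

open Complex Metric Filter Set
open scoped ENNReal NNReal Topology

noncomputable section

/-- The parameter space `A₀ = {u+iv : u ≥ 0, v ≥ 1}`. -/
def A0 : Set ℂ := {τ : ℂ | 0 ≤ τ.re ∧ 1 ≤ τ.im}

/-- The phase space `X = {z : |z - 1/2| ≤ 1/2}`. -/
def Xcl : Set ℂ := {z : ℂ | ‖z - 1/2‖ ≤ 1/2}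

/-- The alphabet `I_τ = {m + nτ : m, n ∈ ℕ₊}`. -/
def Itau (τ : ℂ) : Set ℂ := {b : ℂ | ∃ m n : ℕ+, b = ((m : ℕ) : ℂ) + ((n : ℕ) : ℂ) * τ}

/-- The generator `φ_b(z) = 1/(z+b)`. -/
def phi (b z : ℂ) : ℂ := 1 / (z + b)

/-- For every `τ ∈ A₀` and `b ∈ I_τ`, the map `φ_b` sends `X` into `X`. -/
theorem stmt0 :
    ∀ τ ∈ A0, ∀ b ∈ Itau τ, ∀ z ∈ Xcl,
      z + b ≠ 0 ∧ ‖1 / (z + b) - 1/2‖ ≤ 1/2 := by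
  rintro τ ⟨hre, him⟩ b ⟨m, n, rfl⟩ z hz
  -- real part of z is ≥ 0
  have hzre : 0 ≤ z.re := by
    have h1 : |(z - 1/2).re| ≤ ‖z - 1/2‖ := Complex.abs_re_le_norm _
    have h2 : (z - 1/2).re = z.re - 1/2 := by simp
    have hz' : ‖z - 1/2‖ ≤ 1/2 := hz
    rw [h2] at h1
    have := abs_le.mp (h1.trans hz')
    linarith [this.1]
  have hm : (1 : ℝ) ≤ (m : ℕ) := by exact_mod_cast m.one_le
  have hn : (0 : ℝ) ≤ (n : ℕ) := by positivity
  set w : ℂ := z + (((m : ℕ) : ℂ) + ((n : ℕ) : ℂ) * τ) with hw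
  have hwre : 1 ≤ w.re := by
    have : w.re = z.re + ((m : ℕ) + (n : ℕ) * τ.re) := by
      simp [hw, Complex.add_re, Complex.mul_re]
    rw [this]
    nlinarith
  have hw0 : w ≠ 0 := by
    intro h
    rw [h] at hwre
    simp at hwre
    linarith
  refine ⟨hw0, ?_⟩
  -- reduce to ‖2 - w‖ ≤ ‖w‖
  have key : ‖2 - w‖ ≤ ‖w‖ := by
    have h1 : ‖2 - w‖ ^ 2 ≤ ‖w‖ ^ 2 := by
      simp only [Complex.sq_norm]
      simp only [Complex.normSq_apply, Complex.sub_re, Complex.sub_im]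
      norm_num
      nlinarith [hwre]
    nlinarith [norm_nonneg (2 - w), norm_nonneg w]
  have heq : 1 / w - 1/2 = (2 - w) / (2 * w) := by
    field_simp
    try ring
    try tauto
  rw [heq]
  rw [norm_div, norm_mul]
  have hwn : 0 < ‖w‖ := norm_pos_iff.mpr hw0
  have h2 : ‖(2 : ℂ)‖ = 2 := by norm_num
  rw [h2]
  rw [div_le_iff₀ (by positivity)]
  calc ‖2 - w‖ ≤ ‖w‖ := key
    _ ≤ 1/2 * (2 * ‖w‖) := by linarith
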